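/- Let D be a filtered associative ring D = ∪_i D_{≤i} with D_{≤-1} = 0, containing a commutative subring O = D_{≤0}, such that the filtration is the commutator filtration: D_{≤i} = {Q ∈ D : [Q, f] ∈ D_{≤i-1} for all f ∈ O}. Suppose O has characteristic p. Then for any x ∈ D_{≤1}, the p-th power x^p again lies in D_{≤1}; more precisely, for all f_0, f_1 ∈ O, the iterated commutator [[x^p, f_0], f_1] = 0. -/

import Mathlib

/-- Let `D` be an associative ring of characteristic `p`, `O ⊆ D` a commutative
subring, and `x` an element with `[x, f] ∈ O` for all `f ∈ O` (i.e.
`x ∈ D_{≤1}` for the commutator filtration).  Then `x^p` again lies in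
`D_{≤1}`: `[x^p, f] ∈ O` for all `f ∈ O`, and the iterated commutator
`[[x^p, f₀], f₁]` vanishes for all `f₀, f₁ ∈ O`. -/
theorem pow_p_mem_degree_one (p : ℕ) (hp : p.Prime) (D : Type*) [Ring D]
    [CharP D p] (O : Subring D)
    (hcomm : ∀ f ∈ O, ∀ g ∈ O, f * g = g * f)
    (x : D) (hx : ∀ f ∈ O, x * f - f * x ∈ O) :
    (∀ f ∈ O, x ^ p * f - f * x ^ p ∈ O) ∧
    (∀ f₀ ∈ O, ∀ f₁ ∈ O,
      (x ^ p * f₀ - f₀ * x ^ p) * f₁ - f₁ * (x ^ p * f₀ - f₀ * x ^ p) = 0) := by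
  haveI : Fact p.Prime := ⟨hp⟩
  -- the endomorphism ring of D has characteristic p
  haveI hch : CharP (AddMonoid.End D) p := by
    constructor
    intro n
    constructor
    · intro h
      have h1 : ((n : AddMonoid.End D)) (1 : D) = 0 := by rw [h]; rfl
      have : ((n : D)) = 0 := by
        have : ((n : AddMonoid.End D)) (1 : D) = (n : ℕ) • (1 : D) := by
          simp [AddMonoid.End.natCast_apply]
        rw [this] at h1
        simpa [nsmul_eq_mul] using h1
      exact (CharP.cast_eq_zero_iff D p n).mp this
    · intro h
      refine AddMonoidHom.ext fun d => ?_
      have : ((n : AddMonoid.End D)) d = (n : ℕ) • d := by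
        simp [AddMonoid.End.natCast_apply]
      refine this.trans (show (n : ℕ) • d = 0 from ?_)
      have : (n : D) = 0 := (CharP.cast_eq_zero_iff D p n).mpr h
      calc (n : ℕ) • d = (n : D) * d := by rw [nsmul_eq_mul]
        _ = 0 := by rw [this, zero_mul]
      
  set L : AddMonoid.End D := AddMonoidHom.mulLeft x with hL
  set R : AddMonoid.End D := AddMonoidHom.mulRight x with hR
  have hcom : Commute L R := by
    refine AddMonoidHom.ext fun d => ?_
    show x * (d * x) = (x * d) * x
    rw [mul_assoc]
  have hLpow : ∀ n : ℕ, ∀ d : D, ((L ^ n : AddMonoid.End D)) d = x ^ n * d := by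
    intro n
    induction n with
    | zero => intro d; simp [AddMonoid.End.one_apply]
    | succ k ih =>
      intro d
      rw [pow_succ', pow_succ']
      have : ((L * L ^ k : AddMonoid.End D)) d = L ((L ^ k) d) := rfl
      rw [this, ih]
      show x * (x ^ k * d) = x * x ^ k * d
      rw [mul_assoc]
  have hRpow : ∀ n : ℕ, ∀ d : D, ((R ^ n : AddMonoid.End D)) d = d * x ^ n := by
    intro n
    induction n with
    | zero => intro d; simp [AddMonoid.End.one_apply]
    | succ k ih =>
      intro d
      rw [pow_succ]
      have : ((R ^ k * R : AddMonoid.End D)) d = (R ^ k) (R d) := rfl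
      rw [this]
      have : R d = d * x := rfl
      rw [this, ih, pow_succ', mul_assoc]
  have key : (L - R) ^ p = L ^ p - R ^ p := sub_pow_char_of_commute _ hcom
  -- (L - R)^n maps O into O
  have hmem : ∀ n : ℕ, ∀ f ∈ O, (((L - R) ^ n : AddMonoid.End D)) f ∈ O := by
    intro n
    induction n with
    | zero => intro f hf; simpa [AddMonoid.End.one_apply] using hf
    | succ k ih =>
      intro f hf
      rw [pow_succ]
      have : (((L - R) ^ k * (L - R) : AddMonoid.End D)) f
          = ((L - R) ^ k) ((L - R) f) := rfl
      rw [this]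
      have h1 : ((L - R) : AddMonoid.End D) f = x * f - f * x := rfl
      rw [h1]
      exact ih _ (hx f hf)
  have main : ∀ f : D, x ^ p * f - f * x ^ p = (((L - R) ^ p : AddMonoid.End D)) f := by
    intro f
    rw [key]
    have : ((L ^ p - R ^ p : AddMonoid.End D)) f = (L ^ p) f - (R ^ p) f := rfl
    rw [this, hLpow, hRpow]
  have part1 : ∀ f ∈ O, x ^ p * f - f * x ^ p ∈ O := by
    intro f hf
    rw [main]
    exact hmem p f hf
  refine ⟨part1, ?_⟩
  intro f₀ hf₀ f₁ hf₁
  have h := hcomm _ (part1 f₀ hf₀) _ hf₁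
  rw [h, sub_self]
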